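/- Let H be a 3×3 real symmetric positive semidefinite matrix, let c₁, c₂ be real numbers with 1/2 ≤ c₁ ≤ 1 and 1/2 ≤ c₂ ≤ 1, and let K > 0 satisfy (H₁₁ + c₁)(H₂₂ + H₃₃ + c₂) − H₁₂² − H₁₃² = K. Then H₁₁ + H₂₂ + H₃₃ + 1/2 ≤ 2K, and consequently det H ≤ ( (2K − 1/2)/3 )³. -/

import Mathlib

private lemma amgm3 (a b c : ℝ) (ha : 0 ≤ a) (hb : 0 ≤ b) (hc : 0 ≤ c) :
    a * b * c ≤ ((a + b + c) / 3) ^ 3 := by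
  nlinarith [sq_nonneg (a - b), sq_nonneg (b - c), sq_nonneg (a - c),
    mul_nonneg ha hb, mul_nonneg hb hc, mul_nonneg ha hc,
    mul_nonneg (mul_nonneg ha hb) hc, sq_nonneg (a + b + c),
    mul_nonneg (mul_nonneg ha ha) hb, mul_nonneg (mul_nonneg hb hb) hc,
    mul_nonneg (mul_nonneg hc hc) ha]

private lemma cauchy_entry (H : Matrix (Fin 3) (Fin 3) ℝ) (hH : H.PosSemidef)
    (j : Fin 3) (hj : j ≠ 0) : (H 0 j) ^ 2 ≤ H 0 0 * H j j := by
  have hs : H j 0 = H 0 j := by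
    have := congrFun (congrFun hH.1 j) 0
    simpa [Matrix.conjTranspose_apply] using this.symm
  have key : ∀ t : ℝ, 0 ≤ H 0 0 * (t * t) + (2 * H 0 j) * t + H j j := by
    intro t
    have h := hH.dotProduct_mulVec_nonneg (fun i => if i = 0 then t else if i = j then 1 else 0)
    simp only [dotProduct, Matrix.mulVec, Fin.sum_univ_three, star_trivial] at h
    fin_cases j <;> simp_all <;> nlinarith [h]
  have := discrim_le_zero key
  rw [discrim] at this
  nlinarith [this]

private lemma det_le_cube (H : Matrix (Fin 3) (Fin 3) ℝ) (hH : H.PosSemidef) :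
    H.det ≤ ((H 0 0 + H 1 1 + H 2 2) / 3) ^ 3 := by
  have hherm := hH.1
  have hev : ∀ i, 0 ≤ hherm.eigenvalues i := hH.eigenvalues_nonneg
  have hdet : H.det = ∏ i, hherm.eigenvalues i := by
    have := hherm.det_eq_prod_eigenvalues
    simpa using this
  have htr : H.trace = ∑ i, hherm.eigenvalues i := by
    conv_lhs => rw [hherm.spectral_theorem, Unitary.conjStarAlgAut_apply]
    rw [Matrix.trace_mul_cycle]
    rw [show (star (hherm.eigenvectorUnitary : Matrix (Fin 3) (Fin 3) ℝ)) *
        (hherm.eigenvectorUnitary : Matrix (Fin 3) (Fin 3) ℝ) = 1 from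
      Unitary.coe_star_mul_self _, Matrix.one_mul, Matrix.trace_diagonal]
    simp
  have htr' : H 0 0 + H 1 1 + H 2 2 = ∑ i, hherm.eigenvalues i := by
    rw [← htr, Matrix.trace]
    simp [Fin.sum_univ_three, Matrix.diag]
  rw [hdet, htr', Fin.sum_univ_three, Fin.prod_univ_three]
  exact amgm3 _ _ _ (hev 0) (hev 1) (hev 2)

/-- The algebraic form of the key estimate (2.1) of Section 3: if `H` is a real symmetric
positive semidefinite 3×3 matrix, `1/2 ≤ c₁, c₂ ≤ 1`, `K > 0` and
`(H₁₁ + c₁)(H₂₂ + H₃₃ + c₂) − H₁₂² − H₁₃² = K`, then `tr H + 1/2 ≤ 2K` and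
`det H ≤ ((2K − 1/2)/3)³`. -/
theorem key_estimate_algebraic
    (H : Matrix (Fin 3) (Fin 3) ℝ) (hH : H.PosSemidef)
    (c₁ c₂ K : ℝ)
    (hc₁ : 1 / 2 ≤ c₁) (hc₁' : c₁ ≤ 1)
    (hc₂ : 1 / 2 ≤ c₂) (hc₂' : c₂ ≤ 1)
    (hK : 0 < K)
    (heq : (H 0 0 + c₁) * (H 1 1 + H 2 2 + c₂) - (H 0 1) ^ 2 - (H 0 2) ^ 2 = K) :
    H 0 0 + H 1 1 + H 2 2 + 1 / 2 ≤ 2 * K ∧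
      H.det ≤ ((2 * K - 1 / 2) / 3) ^ 3 := by
  have hdiag : ∀ i : Fin 3, 0 ≤ H i i := by
    intro i
    have h := hH.dotProduct_mulVec_nonneg (Pi.single i 1)
    simp only [dotProduct, Matrix.mulVec, Fin.sum_univ_three, star_trivial] at h
    fin_cases i <;> simpa [Pi.single_apply] using h
  have h00 : 0 ≤ H 0 0 := hdiag 0
  have h11 : 0 ≤ H 1 1 := hdiag 1
  have h22 : 0 ≤ H 2 2 := hdiag 2
  have hc01 : (H 0 1) ^ 2 ≤ H 0 0 * H 1 1 := cauchy_entry H hH 1 (by decide)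
  have hc02 : (H 0 2) ^ 2 ≤ H 0 0 * H 2 2 := cauchy_entry H hH 2 (by decide)
  have htr : H 0 0 + H 1 1 + H 2 2 + 1 / 2 ≤ 2 * K := by nlinarith
  refine ⟨htr, ?_⟩
  have hd := det_le_cube H hH
  have h1 : (H 0 0 + H 1 1 + H 2 2) / 3 ≤ (2 * K - 1 / 2) / 3 := by linarith
  have h2 : (0:ℝ) ≤ (H 0 0 + H 1 1 + H 2 2) / 3 := by linarith
  calc H.det ≤ ((H 0 0 + H 1 1 + H 2 2) / 3) ^ 3 := hd
    _ ≤ ((2 * K - 1 / 2) / 3) ^ 3 := pow_le_pow_left₀ h2 h1 3
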